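/- (Nilpotent perturbation, isometric part) Let A, B be commuting d-tuples of bounded operators with Δ^{m}_{A,B}(X) = 0, and let N_1, N_2 be commuting d-tuples that are n_1- and n_2-nilpotent respectively (all products of components of total degree n_i vanish), with [A, N_1] = [B, N_2] = 0 componentwise. Then Δ^{m+n_1+n_2−2}_{A+N_1, B+N_2}(X) = 0. -/

import Mathlib

open LinearMap


/-- Δ_{A,B}(Y) = Y − Σ_i A_i Y B_i. -/
noncomputable def DeltaOp {E : Type*} [NormedAddCommGroup E] [NormedSpace ℂ E]
    {d : ℕ} (A B : Fin d → (E →L[ℂ] E)) : (E →L[ℂ] E) → (E →L[ℂ] E) :=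
  fun Y => Y - ∑ i, A i * Y * B i

/-- A commuting d-tuple N is n-nilpotent if every product of its entries of total degree n
vanishes. -/
def IsNilpotentTuple {E : Type*} [NormedAddCommGroup E] [NormedSpace ℂ E]
    {d : ℕ} (N : Fin d → (E →L[ℂ] E)) (n : ℕ) : Prop :=
  ∀ α : Fin d → ℕ, (∑ i, α i) = n → (List.ofFn fun i => (N i) ^ (α i)).prod = 0


section aux

private lemma sum_count_eq_length {d : ℕ} (L : List (Fin d)) :
    (∑ i, L.count i) = L.length := by
  induction L with
  | nil => simp
  | cons a t ih =>
    simp only [List.count_cons, List.length_cons, Finset.sum_add_distrib, ih, beq_iff_eq]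
    simp

private lemma word_prod_eq_zero {R : Type*} [Ring R] {d n : ℕ} (N : Fin d → R)
    (hc : ∀ i j, N i * N j = N j * N i)
    (hnil : ∀ α : Fin d → ℕ, (∑ i, α i) = n → (List.ofFn fun i => (N i) ^ (α i)).prod = 0)
    (L : List (Fin d)) (hL : L.length = n) : (L.map N).prod = 0 := by
  classical
  set c : Fin d → ℕ := fun i => L.count i with hc'
  have hperm : L.Perm ((List.finRange d).flatMap fun i => List.replicate (c i) i) := by
    rw [List.perm_iff_count]
    intro b
    rw [List.count_flatMap]
    have : (List.map (List.count b ∘ fun i => List.replicate (c i) i) (List.finRange d)).sum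
        = ∑ i, (if i = b then c i else 0) := by
      rw [Fin.sum_univ_def]
      congr 1
      apply List.map_congr_left
      intro i _
      simp [List.count_replicate, c]
    rw [this, Finset.sum_ite_eq' Finset.univ b]
    simp [c]
  have hmap := hperm.map N
  have hpair : (L.map N).Pairwise Commute := by
    rw [List.pairwise_map]
    exact List.pairwise_of_forall fun i j => hc i j
  rw [hmap.prod_eq' hpair]
  rw [List.map_flatMap]
  have h2 : ∀ i : Fin d, (List.replicate (c i) i).map N = List.replicate (c i) (N i) := by
    intro i; simp
  simp_rw [h2]
  rw [List.flatMap, List.prod_flatten, List.map_map]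
  have h3 : (List.map (List.prod ∘ fun i => List.replicate (c i) (N i)) (List.finRange d))
      = List.map (fun i => N i ^ c i) (List.finRange d) := by
    apply List.map_congr_left; intro i _; simp [List.prod_replicate]
  rw [h3, ← List.ofFn_eq_map]
  exact hnil c (hL ▸ sum_count_eq_length L)

private lemma sum_pow_eq {R : Type*} [Ring R] {d : ℕ} (a : Fin d → R) (n : ℕ) :
    (∑ i, a i) ^ n = ∑ f : Fin n → Fin d, (List.ofFn fun k => a (f k)).prod := by
  induction n with
  | zero => simp
  | succ n ih =>
    rw [pow_succ', ih, Finset.mul_sum]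
    simp_rw [Finset.sum_mul]
    rw [← Equiv.sum_comp (Fin.consEquiv (fun _ => Fin d))
      (fun g => (List.ofFn fun k => a (g k)).prod)]
    rw [Fintype.sum_prod_type, Finset.sum_comm]
    apply Finset.sum_congr rfl
    intro f _
    apply Finset.sum_congr rfl
    intro i _
    simp [Fin.consEquiv, List.ofFn_succ]

variable {K : Type*} [CommRing K] {A : Type*} [Ring A] [Algebra K A]

private lemma lmul_eq (a b : A) : mulLeft K (a * b) = mulLeft K a * mulLeft K b := by
  rw [mulLeft_mul]; rfl

private lemma rprod_list (L : List A) :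
    (L.map (mulRight K)).prod = mulRight K L.reverse.prod := by
  induction L with
  | nil => apply LinearMap.ext; intro x; simp
  | cons a t ih =>
    apply LinearMap.ext; intro x
    simp [ih, Module.End.mul_apply, mul_assoc]

private lemma split_prod {n : ℕ} (M S : Fin n → A) :
    (List.ofFn fun k => mulLeft K (M k) * mulRight K (S k)).prod
      = mulLeft K ((List.ofFn M).prod) * (List.ofFn fun k => mulRight K (S k)).prod := by
  induction n with
  | zero =>
    apply LinearMap.ext; intro x; simp
  | succ n ih =>
    have hc : Commute (mulRight K (S 0)) (mulLeft K ((List.ofFn fun k => M k.succ).prod)) :=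
      (commute_mulLeft_right _ _).symm
    rw [List.ofFn_succ (f := fun k => mulLeft K (M k) * mulRight K (S k)), List.prod_cons,
      ih (fun k => M k.succ) (fun k => S k.succ), List.ofFn_succ (f := M), List.prod_cons,
      lmul_eq, List.ofFn_succ (f := fun k => mulRight K (S k)), List.prod_cons,
      Commute.mul_mul_mul_comm hc]

private lemma commute_l {a b : A} (h : a * b = b * a) :
    Commute (mulLeft K a) (mulLeft K b) := by
  apply LinearMap.ext; intro x
  simp only [Module.End.mul_apply, mulLeft_apply, ← mul_assoc, h]

private lemma commute_r {a b : A} (h : a * b = b * a) :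
    Commute (mulRight K a) (mulRight K b) := by
  apply LinearMap.ext; intro x
  simp only [Module.End.mul_apply, mulRight_apply, mul_assoc, h]

private lemma commute_lr_lr {a b c e : A} (h1 : Commute (mulLeft K a) (mulLeft K c))
    (h2 : Commute (mulRight K b) (mulRight K e)) :
    Commute (mulLeft K a * mulRight K b) (mulLeft K c * mulRight K e) :=
  ((h1.mul_right (commute_mulLeft_right a e)).mul_left
    (((commute_mulLeft_right c b).symm).mul_right h2))

private lemma keyL {d n : ℕ} (M S : Fin d → A)
    (hc : ∀ i j, M i * M j = M j * M i)
    (hnil : ∀ α : Fin d → ℕ, (∑ i, α i) = n → (List.ofFn fun i => (M i) ^ (α i)).prod = 0) :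
    (∑ i, mulLeft K (M i) * mulRight K (S i)) ^ n = 0 := by
  rw [sum_pow_eq]
  apply Finset.sum_eq_zero
  intro f _
  rw [split_prod]
  have h1 : (List.ofFn fun k => M (f k)) = (List.ofFn f).map M := by
    rw [List.map_ofFn]; rfl
  rw [h1, word_prod_eq_zero M hc hnil _ (by simp), mulLeft_zero_eq_zero, zero_mul]

private lemma keyR {d n : ℕ} (M S : Fin d → A)
    (hc : ∀ i j, S i * S j = S j * S i)
    (hnil : ∀ α : Fin d → ℕ, (∑ i, α i) = n → (List.ofFn fun i => (S i) ^ (α i)).prod = 0) :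
    (∑ i, mulLeft K (M i) * mulRight K (S i)) ^ n = 0 := by
  rw [sum_pow_eq]
  apply Finset.sum_eq_zero
  intro f _
  rw [split_prod]
  have h1 : (List.ofFn fun k => mulRight K (S (f k))) = ((List.ofFn f).map S).map (mulRight K) := by
    rw [List.map_map, List.map_ofFn]; rfl
  rw [h1, rprod_list, ← List.map_reverse,
    word_prod_eq_zero S hc hnil _ (by simp), mulRight_zero_eq_zero, mul_zero]

end aux

private lemma my_neg_pow_eq_zero {R : Type*} [Ring R] {a : R} {t : ℕ} (h : a ^ t = 0) :
    (-a) ^ t = 0 := by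
  have h1 : (-a) ^ t = (-1) ^ t * a ^ t := neg_pow a t
  rw [h1, h, mul_zero]

theorem stmt15 {E : Type*} [NormedAddCommGroup E] [NormedSpace ℂ E] [CompleteSpace E]
    {d : ℕ} (A B N₁ N₂ : Fin d → (E →L[ℂ] E))
    (hA : ∀ i j, A i * A j = A j * A i) (hB : ∀ i j, B i * B j = B j * B i)
    (hN₁ : ∀ i j, N₁ i * N₁ j = N₁ j * N₁ i) (hN₂ : ∀ i j, N₂ i * N₂ j = N₂ j * N₂ i)
    (m n₁ n₂ : ℕ) (hm : 0 < m) (hn₁ : 0 < n₁) (hn₂ : 0 < n₂)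
    (hnil₁ : IsNilpotentTuple N₁ n₁) (hnil₂ : IsNilpotentTuple N₂ n₂)
    (hAN : ∀ i j, A i * N₁ j = N₁ j * A i) (hBN : ∀ i j, B i * N₂ j = N₂ j * B i)
    (X : E →L[ℂ] E) (h : (DeltaOp A B)^[m] X = 0) :
    (DeltaOp (fun i => A i + N₁ i) (fun i => B i + N₂ i))^[m + n₁ + n₂ - 2] X = 0 := by
  classical
  have happ : ∀ (A' B' : Fin d → (E →L[ℂ] E)) (Y : E →L[ℂ] E),
      DeltaOp A' B' Y = ((1 : Module.End ℂ (E →L[ℂ] E))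
        - ∑ i, mulLeft ℂ (A' i) * mulRight ℂ (B' i)) Y := by
    intro A' B' Y
    simp [DeltaOp, LinearMap.sub_apply, LinearMap.sum_apply, Module.End.mul_apply, mul_assoc]
  have hiter : ∀ (A' B' : Fin d → (E →L[ℂ] E)) (k : ℕ) (Y : E →L[ℂ] E),
      (DeltaOp A' B')^[k] Y = (((1 : Module.End ℂ (E →L[ℂ] E))
        - ∑ i, mulLeft ℂ (A' i) * mulRight ℂ (B' i)) ^ k) Y := by
    intro A' B' k
    induction k with
    | zero => intro Y; simp
    | succ k ih =>
      intro Y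
      rw [Function.iterate_succ_apply', ih, happ, pow_succ', Module.End.mul_apply]
  set Dab : Module.End ℂ (E →L[ℂ] E) :=
    (1 : Module.End ℂ (E →L[ℂ] E)) - ∑ i, mulLeft ℂ (A i) * mulRight ℂ (B i) with hDab
  set P : Module.End ℂ (E →L[ℂ] E) := ∑ i, mulLeft ℂ (N₁ i) * mulRight ℂ (B i + N₂ i) with hPdef
  set Q : Module.End ℂ (E →L[ℂ] E) := ∑ i, mulLeft ℂ (A i) * mulRight ℂ (N₂ i) with hQdef
  have hsplit : (1 : Module.End ℂ (E →L[ℂ] E))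
      - ∑ i, mulLeft ℂ (A i + N₁ i) * mulRight ℂ (B i + N₂ i) = Dab - (P + Q) := by
    rw [hDab, hPdef, hQdef]
    apply LinearMap.ext; intro Y
    simp only [LinearMap.sub_apply, LinearMap.add_apply, LinearMap.sum_apply, Module.End.mul_apply,
      Module.End.one_apply, mulLeft_apply, mulRight_apply, mul_add, add_mul,
      Finset.sum_add_distrib]
    abel
  have hDP : Commute Dab P := by
    apply Commute.sub_left (Commute.one_left P)
    apply Commute.sum_left; intro i _
    apply Commute.sum_right; intro j _
    exact commute_lr_lr (commute_l (hAN i j))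
      (commute_r (by rw [mul_add, add_mul, hB i j, hBN i j]))
  have hDQ : Commute Dab Q := by
    apply Commute.sub_left (Commute.one_left Q)
    apply Commute.sum_left; intro i _
    apply Commute.sum_right; intro j _
    exact commute_lr_lr (commute_l (hA i j)) (commute_r (hBN i j))
  have hPQ : Commute P Q := by
    apply Commute.sum_left; intro i _
    apply Commute.sum_right; intro j _
    exact commute_lr_lr (commute_l (hAN j i).symm)
      (commute_r (by rw [add_mul, mul_add, hBN i j, hN₂ i j]))
  have hPn : P ^ n₁ = 0 := keyL N₁ (fun i => B i + N₂ i) hN₁ hnil₁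
  have hQn : Q ^ n₂ = 0 := keyR A N₂ hN₂ hnil₂
  have hu : (P + Q) ^ (n₁ + n₂ - 1) = 0 := by
    rw [hPQ.add_pow]
    apply Finset.sum_eq_zero
    intro k hk
    rw [Finset.mem_range] at hk
    rcases le_or_gt n₁ k with h1 | h1
    · have hz : P ^ k = 0 := by
        rw [show k = n₁ + (k - n₁) by omega, pow_add, hPn, zero_mul]
      rw [hz, zero_mul, zero_mul]
    · have hz : Q ^ (n₁ + n₂ - 1 - k) = 0 := by
        rw [show n₁ + n₂ - 1 - k = n₂ + (n₁ + n₂ - 1 - k - n₂) by omega, pow_add, hQn, zero_mul]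
      rw [hz, mul_zero, zero_mul]
  have hDm : (Dab ^ m) X = 0 := (hiter A B m X).symm.trans h
  have hcD : Commute Dab (-(P + Q)) := (hDP.add_right hDQ).neg_right
  have goal' : ((Dab - (P + Q)) ^ (m + n₁ + n₂ - 2)) X = 0 := by
    rw [sub_eq_add_neg, hcD.add_pow, LinearMap.sum_apply]
    apply Finset.sum_eq_zero
    intro k hk
    rw [Finset.mem_range] at hk
    rcases le_or_gt (n₁ + n₂ - 1) (m + n₁ + n₂ - 2 - k) with h1 | h1
    · have hz0 : (P + Q) ^ (m + n₁ + n₂ - 2 - k) = 0 := by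
        rw [show m + n₁ + n₂ - 2 - k
            = (n₁ + n₂ - 1) + (m + n₁ + n₂ - 2 - k - (n₁ + n₂ - 1)) by omega,
          pow_add, hu, zero_mul]
      have hz : (-(P + Q)) ^ (m + n₁ + n₂ - 2 - k) = 0 := my_neg_pow_eq_zero hz0
      rw [hz, mul_zero, zero_mul, LinearMap.zero_apply]
    · have hk' : m ≤ k := by omega
      have hcomm : Commute (Dab ^ k) ((-(P + Q)) ^ (m + n₁ + n₂ - 2 - k)
          * (((m + n₁ + n₂ - 2).choose k : ℕ) : Module.End ℂ (E →L[ℂ] E))) :=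
        (hcD.pow_pow k _).mul_right (Nat.cast_commute _ _).symm
      rw [mul_assoc, hcomm.eq, Module.End.mul_apply]
      have hz : (Dab ^ k) X = 0 := by
        rw [show k = (k - m) + m by omega, pow_add, Module.End.mul_apply, hDm, map_zero]
      rw [hz, map_zero]
  rw [hiter (fun i => A i + N₁ i) (fun i => B i + N₂ i) (m + n₁ + n₂ - 2) X, hsplit]
  exact goal'
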